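/- Let p be a unit quaternion and d a quaternion with p conj(d) + d conj(p) = 0. Then the map x ↦ (p + εd) x (conj(p) − ε conj(d)), restricted to dual quaternions of the form x = 1 + ε(x₁ i + x₂ j + x₃ k), sends such elements to elements of the same form, and the induced map on (x₁,x₂,x₃) ∈ ℝ³ is an isometry (a rigid body displacement: rotation by p composed with a translation determined by d). -/

import Mathlib

noncomputable section
open Quaternion DualNumber TrivSqZeroExt

/-- The dual quaternions: quaternions with dual-number coefficients. -/
abbrev DQ := Quaternion (DualNumber ℝ)

/-- The dual quaternion `p + ε d` with primal part `p` and dual part `d`. -/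
def toDQ (p d : Quaternion ℝ) : DQ :=
  Quaternion.dualNumberEquiv.symm (⟨p, d⟩ : DualNumber (Quaternion ℝ))

/-- The encoding of a point of ℝ³ as the dual quaternion 1 + ε(x₁i + x₂j + x₃k). -/
def Pt (v : EuclideanSpace ℝ (Fin 3)) : DQ :=
  toDQ 1 ⟨0, v 0, v 1, v 2⟩

lemma toDQ_mul (a b c e : Quaternion ℝ) :
    toDQ a b * toDQ c e = toDQ (a * c) (a * e + b * c) := by
  unfold toDQ
  refine (map_mul (Quaternion.dualNumberEquiv (R := ℝ)).symm _ _).symm.trans ?_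
  rfl

lemma re_eq_zero_of_star_eq_neg {y : ℍ[ℝ]} (h : star y = -y) : y.re = 0 := by
  have := congrArg QuaternionAlgebra.re h
  simp at this
  linarith

/-- If p is a unit quaternion and p·conj(d) + d·conj(p) = 0, then
x ↦ (p + εd)·x·(conj(p) − ε·conj(d)) maps point-encoding dual quaternions to
point-encoding dual quaternions, and the induced map on ℝ³ is an isometry. -/
theorem action_is_isometry (p d : Quaternion ℝ)
    (hp : p * star p = 1) (hs : p * star d + d * star p = 0) :
    ∃ f : EuclideanSpace ℝ (Fin 3) → EuclideanSpace ℝ (Fin 3),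
      Isometry f ∧
      ∀ v : EuclideanSpace ℝ (Fin 3),
        toDQ p d * Pt v * toDQ (star p) (-(star d)) = Pt (f v) := by
  have hnorm : normSq p = 1 := by
    have h := hp
    rw [Quaternion.self_mul_star] at h
    have := congrArg QuaternionAlgebra.re h
    simpa using this
  set Q : EuclideanSpace ℝ (Fin 3) → ℍ[ℝ] := fun v => ⟨0, v 0, v 1, v 2⟩ with hQ
  set t : ℍ[ℝ] := d * star p - p * star d with ht
  set g : EuclideanSpace ℝ (Fin 3) → ℍ[ℝ] := fun v => p * Q v * star p + t with hg
  have hQs : ∀ v, star (Q v) = - Q v := by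
    intro v
    change star (⟨0, v 0, v 1, v 2⟩ : ℍ[ℝ]) = -(⟨0, v 0, v 1, v 2⟩ : ℍ[ℝ])
    ext <;> simp [Quaternion.re_star, Quaternion.imI_star, Quaternion.imJ_star, Quaternion.imK_star]
  have hconj : ∀ x : ℍ[ℝ], star x = -x → star (p * x * star p) = -(p * x * star p) := by
    intro x hx
    simp only [star_mul, star_star, hx, mul_assoc, neg_mul, mul_neg]
  have hts : star t = -t := by
    simp [ht, star_sub, star_mul]
  have hgs : ∀ v, star (g v) = -(g v) := by
    intro v
    rw [hg]
    simp only [star_add, hconj _ (hQs v), hts, neg_add]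
  have hgre : ∀ v, (g v).re = 0 := fun v => re_eq_zero_of_star_eq_neg (hgs v)
  set f : EuclideanSpace ℝ (Fin 3) → EuclideanSpace ℝ (Fin 3) :=
    fun v => WithLp.toLp 2 ![(g v).imI, (g v).imJ, (g v).imK] with hf
  have hQsub : ∀ u v, Q u - Q v = Q (u - v) := by
    intro u v
    change (⟨0, u 0, u 1, u 2⟩ : ℍ[ℝ]) - ⟨0, v 0, v 1, v 2⟩ = (⟨0, (u-v) 0, (u-v) 1, (u-v) 2⟩ : ℍ[ℝ])
    ext <;> simp [Quaternion.re_sub, Quaternion.imI_sub, Quaternion.imJ_sub, Quaternion.imK_sub]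
  have hgsub : ∀ u v, g u - g v = p * Q (u - v) * star p := by
    intro u v
    rw [hg]
    simp only
    rw [← hQsub]
    noncomm_ring
  refine ⟨f, ?_, ?_⟩
  · apply Isometry.of_dist_eq
    intro u v
    have hw := hgsub u v
    have hwre : (g u - g v).re = 0 := by simp [Quaternion.re_sub, hgre]
    have hnw : normSq (g u - g v) = normSq (Q (u - v)) := by
      rw [hw, map_mul, map_mul, normSq_star, hnorm]
      ring
    have hqre : (Q (u - v)).re = 0 := by simp [hQ]
    rw [EuclideanSpace.dist_eq, EuclideanSpace.dist_eq,
      Fin.sum_univ_three, Fin.sum_univ_three]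
    simp only [Real.dist_eq, sq_abs]
    congr 1
    have e1 : f u 0 - f v 0 = (g u - g v).imI := by simp [hf]
    have e2 : f u 1 - f v 1 = (g u - g v).imJ := by simp [hf]
    have e3 : f u 2 - f v 2 = (g u - g v).imK := by simp [hf]
    have hsum1 : (f u 0 - f v 0)^2 + (f u 1 - f v 1)^2 + (f u 2 - f v 2)^2
        = normSq (g u - g v) := by
      rw [e1, e2, e3, Quaternion.normSq_def', hwre]
      ring
    have hsum2 : (u 0 - v 0)^2 + (u 1 - v 1)^2 + (u 2 - v 2)^2
        = normSq (Q (u - v)) := by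
      rw [Quaternion.normSq_def']
      have h0 : ∀ i : Fin 3, (u - v) i = u i - v i := fun i => rfl
      simp [hQ, h0]
    rw [hsum1, hsum2, hnw]
  · intro v
    have key : toDQ p d * Pt v * toDQ (star p) (-star d) = toDQ 1 (g v) := by
      rw [Pt, toDQ_mul p d 1 ⟨0, v 0, v 1, v 2⟩, toDQ_mul]
      simp only [mul_one]
      rw [hp]
      congr 1
      rw [hg, ht]
      simp only [hQ]
      noncomm_ring
    rw [key, Pt]
    congr 1
    have : g v = ⟨0, (g v).imI, (g v).imJ, (g v).imK⟩ := by
      ext <;> simp [hgre v]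
    rw [this]
    congr 1 <;> simp [hf]
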